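/- For all integers m and k, the group J_6(m,k) = ⟨t, y | t^6, y^{m-k} t^3 y^k t^2⟩ is isomorphic to the group ⟨R, S | R^2, R S^m (R S^k R S^{m-k})^2⟩. -/

import Mathlib

section helpers
variable {G : Type*} [Group G]

private lemma zp3 (a : G) : a^(3:ℤ) = a*a*a := by
  rw [show (3:ℤ) = 2+1 by norm_num, zpow_add, zpow_two, zpow_one]

private lemma zp6 (a : G) : a^(6:ℤ) = (a*a*a)*(a*a*a) := by
  rw [show (6:ℤ) = 3*2 by norm_num, zpow_mul, zpow_two, zp3]

variable (m k : ℤ)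

-- G₁ facts: relations t⁶ = 1, y^{m-k} t³ y^k t² = 1
private lemma hJ1 {t y : G} (r2 : y^(m-k) * t^(3:ℤ) * y^k * t^(2:ℤ) = 1) :
    t^(3:ℤ) * y^k = y^(k-m) * t^(-2:ℤ) := by
  calc t^(3:ℤ) * y^k
      = y^(k-m) * (y^(m-k) * t^(3:ℤ) * y^k * t^(2:ℤ)) * t^(-2:ℤ) := by group
    _ = y^(k-m) * t^(-2:ℤ) := by rw [r2]; group

private lemma hJ2 {t y : G} (r1 : t^(6:ℤ) = 1) (r2 : y^(m-k) * t^(3:ℤ) * y^k * t^(2:ℤ) = 1) :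
    t^(2:ℤ) * y^(m-k) = y^(-k:ℤ) * t^(3:ℤ) := by
  have h0 : t^(-3:ℤ) = t^(3:ℤ) := by
    calc t^(-3:ℤ) = t^(3:ℤ) * (t^(6:ℤ))⁻¹ := by group
      _ = t^(3:ℤ) := by rw [r1]; group
  have h2' : t^(2:ℤ) = y^(-k:ℤ) * t^(-3:ℤ) * y^(k-m) := by
    calc t^(2:ℤ)
        = y^(-k:ℤ) * t^(-3:ℤ) * y^(k-m) * (y^(m-k) * t^(3:ℤ) * y^k * t^(2:ℤ)) := by group
      _ = y^(-k:ℤ) * t^(-3:ℤ) * y^(k-m) := by rw [r2]; group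
  rw [h2', h0]; group

private lemma hJE {t y : G} (r1 : t^(6:ℤ) = 1) (r2 : y^(m-k) * t^(3:ℤ) * y^k * t^(2:ℤ) = 1) :
    t^(3:ℤ) * y^m * (t^(3:ℤ) * y^k * t^(3:ℤ) * y^(m-k))^2 = 1 := by
  rw [pow_two]
  calc t^(3:ℤ) * y^m * ((t^(3:ℤ) * y^k * t^(3:ℤ) * y^(m-k)) * (t^(3:ℤ) * y^k * t^(3:ℤ) * y^(m-k)))
      = t^(3:ℤ) * y^m * ((t^(3:ℤ) * y^k) * (t^(3:ℤ) * y^(m-k)) *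
          ((t^(3:ℤ) * y^k) * (t^(3:ℤ) * y^(m-k)))) := by group
    _ = t^(3:ℤ) * y^m * ((y^(k-m) * t^(-2:ℤ)) * (t^(3:ℤ) * y^(m-k)) *
          ((y^(k-m) * t^(-2:ℤ)) * (t^(3:ℤ) * y^(m-k)))) := by rw [hJ1 m k r2]
    _ = t^(3:ℤ) * y^m * y^(k-m) * (t * t * y^(m-k)) := by group
    _ = t^(3:ℤ) * y^m * y^(k-m) * (t^(2:ℤ) * y^(m-k)) := by rw [← zpow_two]
    _ = t^(3:ℤ) * y^m * y^(k-m) * (y^(-k:ℤ) * t^(3:ℤ)) := by rw [hJ2 m k r1 r2]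
    _ = t^(6:ℤ) := by group
    _ = 1 := r1

private lemma hJ3 {t : G} (r1 : t^(6:ℤ) = 1) : (t^(3:ℤ))^(2:ℤ) = 1 := by
  rw [← zpow_mul]; norm_num; exact_mod_cast r1

private lemma hJt {t y : G} (r2 : y^(m-k) * t^(3:ℤ) * y^k * t^(2:ℤ) = 1) :
    y^(m-k) * t^(3:ℤ) * y^k * t^(3:ℤ) = t := by
  calc y^(m-k) * t^(3:ℤ) * y^k * t^(3:ℤ)
      = y^(m-k) * ((t^(3:ℤ) * y^k) * t^(3:ℤ)) := by group
    _ = y^(m-k) * ((y^(k-m) * t^(-2:ℤ)) * t^(3:ℤ)) := by rw [hJ1 m k r2]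
    _ = t := by group

-- G₂ facts: relations r² = 1, r s^m (r s^k r s^{m-k})² = 1
private lemma hK0 {r : G} (s1 : r^(2:ℤ) = 1) : r * r = 1 := (zpow_two r).symm.trans s1

private lemma hKX {r s : G} (s1 : r^(2:ℤ) = 1)
    (s2 : r * s^m * (r * s^k * r * s^(m-k))^2 = 1) :
    (r * s^k * r * s^(m-k)) * (r * s^k * r * s^(m-k)) = s^(-m:ℤ) * r := by
  have hri : r⁻¹ = r := by
    calc r⁻¹ = r * (r^(2:ℤ))⁻¹ := by group
      _ = r := by rw [s1]; group
  rw [pow_two] at s2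
  calc (r * s^k * r * s^(m-k)) * (r * s^k * r * s^(m-k))
      = s^(-m:ℤ) * r⁻¹ * (r * s^m * ((r * s^k * r * s^(m-k)) * (r * s^k * r * s^(m-k)))) := by
        group
    _ = s^(-m:ℤ) * r⁻¹ := by rw [s2]; group
    _ = s^(-m:ℤ) * r := by rw [hri]

private lemma hKw2 {r s : G} (s1 : r^(2:ℤ) = 1)
    (s2 : r * s^m * (r * s^k * r * s^(m-k))^2 = 1) :
    (s^(m-k) * r * s^k * r) * (s^(m-k) * r * s^k * r) = s^(-k:ℤ) * r * s^(k-m) := by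
  calc (s^(m-k) * r * s^k * r) * (s^(m-k) * r * s^k * r)
      = s^(m-k) * ((r * s^k * r * s^(m-k)) * (r * s^k * r * s^(m-k))) * s^(k-m) := by group
    _ = s^(m-k) * (s^(-m:ℤ) * r) * s^(k-m) := by rw [hKX m k s1 s2]
    _ = s^(-k:ℤ) * r * s^(k-m) := by group

private lemma hKw3 {r s : G} (s1 : r^(2:ℤ) = 1)
    (s2 : r * s^m * (r * s^k * r * s^(m-k))^2 = 1) :
    (s^(m-k) * r * s^k * r) * (s^(m-k) * r * s^k * r) * (s^(m-k) * r * s^k * r) = r := by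
  rw [hKw2 m k s1 s2]
  calc (s^(-k:ℤ) * r * s^(k-m)) * (s^(m-k) * r * s^k * r)
      = s^(-k:ℤ) * (r * r) * (s^k * r) := by group
    _ = s^(-k:ℤ) * (s^k * r) := by rw [hK0 s1]; group
    _ = r := by group

private lemma hK3 {r s : G} (s1 : r^(2:ℤ) = 1)
    (s2 : r * s^m * (r * s^k * r * s^(m-k))^2 = 1) :
    (s^(m-k) * r * s^k * r)^(3:ℤ) = r := by
  rw [zp3]; exact hKw3 m k s1 s2

private lemma hK6 {r s : G} (s1 : r^(2:ℤ) = 1)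
    (s2 : r * s^m * (r * s^k * r * s^(m-k))^2 = 1) :
    (s^(m-k) * r * s^k * r)^(6:ℤ) = 1 := by
  rw [zp6, hKw3 m k s1 s2]; exact hK0 s1

private lemma hKB {r s : G} (s1 : r^(2:ℤ) = 1)
    (s2 : r * s^m * (r * s^k * r * s^(m-k))^2 = 1) :
    s^(m-k) * (s^(m-k) * r * s^k * r)^(3:ℤ) * s^k * (s^(m-k) * r * s^k * r)^(2:ℤ) = 1 := by
  rw [zpow_two, zp3, hKw3 m k s1 s2, hKw2 m k s1 s2]
  calc s^(m-k) * r * s^k * (s^(-k:ℤ) * r * s^(k-m))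
      = s^(m-k) * (r * r) * s^(k-m) := by group
    _ = s^(m-k) * s^(k-m) := by rw [hK0 s1]; group
    _ = 1 := by group

end helpers


/-- For all integers m, k, the group J₆(m,k) = ⟨t, y | t⁶, y^{m-k} t³ y^k t²⟩ is isomorphic
to ⟨R, S | R², R Sᵐ (R Sᵏ R S^{m-k})²⟩.
(Generators: `true ↦ t` resp. `R`, `false ↦ y` resp. `S`.) -/
theorem stmt_13 (m k : ℤ)
    (rels₁ rels₂ : Set (FreeGroup Bool))
    (h₁ : rels₁ = {FreeGroup.of true ^ (6 : ℤ),
      FreeGroup.of false ^ (m - k) * FreeGroup.of true ^ (3 : ℤ) *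
        FreeGroup.of false ^ k * FreeGroup.of true ^ (2 : ℤ)})
    (h₂ : rels₂ = {FreeGroup.of true ^ (2 : ℤ),
      FreeGroup.of true * FreeGroup.of false ^ m *
        (FreeGroup.of true * FreeGroup.of false ^ k *
          FreeGroup.of true * FreeGroup.of false ^ (m - k)) ^ 2}) :
    Nonempty (PresentedGroup rels₁ ≃* PresentedGroup rels₂) := by
  have rel₁ : ∀ w ∈ rels₁, PresentedGroup.mk rels₁ w = 1 := fun w hw =>
    (QuotientGroup.eq_one_iff _).mpr (Subgroup.subset_normalClosure hw)
  have rel₂ : ∀ w ∈ rels₂, PresentedGroup.mk rels₂ w = 1 := fun w hw =>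
    (QuotientGroup.eq_one_iff _).mpr (Subgroup.subset_normalClosure hw)
  -- generators
  set t : PresentedGroup rels₁ := PresentedGroup.of true with ht
  set y : PresentedGroup rels₁ := PresentedGroup.of false with hy
  set r : PresentedGroup rels₂ := PresentedGroup.of true with hr
  set s : PresentedGroup rels₂ := PresentedGroup.of false with hs
  -- relations in the first group
  have r1 : t^(6:ℤ) = 1 := by
    have hm : FreeGroup.of true ^ (6:ℤ) ∈ rels₁ := by rw [h₁]; exact Set.mem_insert _ _
    have h := rel₁ _ hm
    simp only [map_zpow] at h; exact h
  have r2 : y^(m-k) * t^(3:ℤ) * y^k * t^(2:ℤ) = 1 := by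
    have hm : FreeGroup.of false ^ (m - k) * FreeGroup.of true ^ (3:ℤ) *
        FreeGroup.of false ^ k * FreeGroup.of true ^ (2:ℤ) ∈ rels₁ := by
      rw [h₁]; exact Set.mem_insert_of_mem _ rfl
    have h := rel₁ _ hm
    simp only [map_mul, map_zpow] at h; exact h
  -- relations in the second group
  have s1 : r^(2:ℤ) = 1 := by
    have hm : FreeGroup.of true ^ (2:ℤ) ∈ rels₂ := by rw [h₂]; exact Set.mem_insert _ _
    have h := rel₂ _ hm
    simp only [map_zpow] at h; exact h
  have s2 : r * s^m * (r * s^k * r * s^(m-k))^2 = 1 := by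
    have hm : FreeGroup.of true * FreeGroup.of false ^ m *
        (FreeGroup.of true * FreeGroup.of false ^ k *
          FreeGroup.of true * FreeGroup.of false ^ (m - k)) ^ 2 ∈ rels₂ := by
      rw [h₂]; exact Set.mem_insert_of_mem _ rfl
    have h := rel₂ _ hm
    simp only [map_mul, map_zpow, map_pow] at h; exact h
  -- the two homomorphisms
  have hf : ∀ w ∈ rels₂, FreeGroup.lift (fun b => cond b (t^(3:ℤ)) y) w = 1 := by
    intro w hw
    rw [h₂, Set.mem_insert_iff, Set.mem_singleton_iff] at hw
    rcases hw with rfl | rfl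
    · simp only [map_zpow, FreeGroup.lift_apply_of]
      exact hJ3 r1
    · simp only [map_mul, map_zpow, map_pow, FreeGroup.lift_apply_of]
      exact hJE m k r1 r2
  have hg : ∀ w ∈ rels₁, FreeGroup.lift (fun b => cond b (s^(m-k)*r*s^k*r) s) w = 1 := by
    intro w hw
    rw [h₁, Set.mem_insert_iff, Set.mem_singleton_iff] at hw
    rcases hw with rfl | rfl
    · simp only [map_zpow, FreeGroup.lift_apply_of]
      exact hK6 m k s1 s2
    · simp only [map_mul, map_zpow, FreeGroup.lift_apply_of]
      exact hKB m k s1 s2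
  set φh : PresentedGroup rels₂ →* PresentedGroup rels₁ := PresentedGroup.toGroup hf with hφh
  set ψh : PresentedGroup rels₁ →* PresentedGroup rels₂ := PresentedGroup.toGroup hg with hψh
  have eψt : ψh t = s^(m-k)*r*s^k*r := PresentedGroup.toGroup.of hg
  have eψy : ψh y = s := PresentedGroup.toGroup.of hg
  have eφr : φh r = t^(3:ℤ) := PresentedGroup.toGroup.of hf
  have eφs : φh s = y := PresentedGroup.toGroup.of hf
  refine ⟨MonoidHom.toMulEquiv ψh φh ?_ ?_⟩
  · refine PresentedGroup.ext fun b => ?_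
    cases b
    · show φh (ψh y) = y
      rw [eψy, eφs]
    · show φh (ψh t) = t
      rw [eψt, map_mul, map_mul, map_mul, map_zpow, map_zpow, eφr, eφs]
      exact hJt m k r2
  · refine PresentedGroup.ext fun b => ?_
    cases b
    · show ψh (φh s) = s
      rw [eφs, eψy]
    · show ψh (φh r) = r
      rw [eφr, map_zpow, eψt]
      exact hK3 m k s1 s2
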